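/- Assume m ≥ 2. Then for every z ∈ ℂ, D(z) = Σ_{i=0}^{m−1} Σ_{j=1}^{n} (φ_j + c_i/λ_j) · λ_j · z^{m−2} · ∏_{ℓ≠j} (z^m − λ_ℓ^m). -/

import Mathlib

open Matrix BigOperators

noncomputable section

/-- The block matrix `L̃` with diagonal blocks `Λ = diag(λ₁,…,λₙ)` at positions `(h, h+1)`:
its entry in row `(h,j)` and column `(i,k)` is `λⱼ` if `k = j` and `i = h + 1` in `ℤ/mℤ`,
and `0` otherwise. -/
def Ltilde (m n : ℕ) (lam : Fin n → ℂ) :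
    Matrix (ZMod m × Fin n) (ZMod m × Fin n) ℂ :=
  Matrix.of fun p q => if q.2 = p.2 ∧ q.1 = p.1 + 1 then lam p.2 else 0

/-- `|g| = g₀ + g₁ + ⋯ + g_{m-1}`. -/
def gAbs (m : ℕ) (g : ZMod m → ℂ) : ℂ :=
  ∑ s ∈ Finset.range m, g (s : ZMod m)

/-- `cᵢ = Σ_{r=0}^{i} g_r − Σ_{s=0}^{m−1} ((m−s)/m)·g_s`, the index `i` read modulo `m`. -/
def cConst (m : ℕ) (g : ZMod m → ℂ) (i : ZMod m) : ℂ :=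
  (∑ r ∈ Finset.range (i.val + 1), g (r : ZMod m)) -
    ∑ s ∈ Finset.range m, (((m : ℂ) - (s : ℂ)) / (m : ℂ)) * g (s : ZMod m)

/-- The (spinless) matrix `Q̃`: its entry in row `(h,j)` and column `(i,k)` vanishes unless
`h = i + 1` in `ℤ/mℤ`, in which case it equals `φⱼ + cᵢ/λⱼ` if `k = j`, and
`−|g|·λⱼ^{m−i−1}·λₖ^{i}/(λⱼ^m − λₖ^m)` if `k ≠ j` (where `i` is taken as its representative
in `{0,…,m−1}`). -/
def Qtilde (m n : ℕ) (g : ZMod m → ℂ) (lam phi : Fin n → ℂ) :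
    Matrix (ZMod m × Fin n) (ZMod m × Fin n) ℂ :=
  Matrix.of fun p q =>
    if p.1 = q.1 + 1 then
      if q.2 = p.2 then phi p.2 + cConst m g q.1 / lam p.2
      else -(gAbs m g) * lam p.2 ^ (m - q.1.val - 1) * lam q.2 ^ q.1.val /
        (lam p.2 ^ m - lam q.2 ^ m)
    else 0

/-- `A(z) = det(z·1 − L̃)`. -/
def Afun (m n : ℕ) [NeZero m] (lam : Fin n → ℂ) (z : ℂ) : ℂ :=
  (z • (1 : Matrix (ZMod m × Fin n) (ZMod m × Fin n) ℂ) - Ltilde m n lam).det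

/-- `D(z) = tr(Q̃ · adj(z·1 − L̃))`. -/
def Dfun (m n : ℕ) [NeZero m] (g : ZMod m → ℂ) (lam phi : Fin n → ℂ) (z : ℂ) : ℂ :=
  Matrix.trace (Qtilde m n g lam phi *
    (z • (1 : Matrix (ZMod m × Fin n) (ZMod m × Fin n) ℂ) - Ltilde m n lam).adjugate)

/-- `C(z) = w̃ · Q̃ · adj(z·1 − L̃) · ṽ`, where `ṽ` has entry `1` at each index `(0,j)` and `0`
elsewhere, and `w̃` has entry `|g|` at each index `(0,j)` and `0` elsewhere. -/
def Cfun (m n : ℕ) [NeZero m] (g : ZMod m → ℂ) (lam phi : Fin n → ℂ) (z : ℂ) : ℂ :=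
  (fun p : ZMod m × Fin n => if p.1 = 0 then gAbs m g else 0) ⬝ᵥ
    ((Qtilde m n g lam phi *
        (z • (1 : Matrix (ZMod m × Fin n) (ZMod m × Fin n) ℂ) - Ltilde m n lam).adjugate) *ᵥ
      fun p : ZMod m × Fin n => if p.1 = 0 then (1 : ℂ) else 0)

namespace DAux
open Polynomial

def S (m : ℕ) : Matrix (ZMod m) (ZMod m) ℂ :=
  Matrix.of fun h i => if i = h + 1 then 1 else 0

def Nb (m : ℕ) (lam z : ℂ) : Matrix (ZMod m) (ZMod m) ℂ :=
  Matrix.of fun h i => z ^ (m - 1 - (i - h).val) * lam ^ ((i - h).val)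

variable {m : ℕ}

lemma val_neg_one' [NeZero m] : (-1 : ZMod m).val = m - 1 := by
  have hm : m ≠ 0 := NeZero.ne m
  have h1 : ((m - 1 : ℕ) : ZMod m) = -1 := by
    have h0 : ((m : ℕ) : ZMod m) = 0 := ZMod.natCast_self m
    have hc : ((m - 1 : ℕ) : ZMod m) = (m : ZMod m) - 1 := by
      push_cast [Nat.cast_sub (Nat.one_le_iff_ne_zero.mpr hm)]; ring
    rw [hc, h0]; ring
  rw [← h1, ZMod.val_cast_of_lt]; omega

lemma mul_Nb [NeZero m] (lam z : ℂ) :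
    (z • (1 : Matrix (ZMod m) (ZMod m) ℂ) - lam • S m) * Nb m lam z
      = (z ^ m - lam ^ m) • (1 : Matrix (ZMod m) (ZMod m) ℂ) := by
  have hm : m ≠ 0 := NeZero.ne m
  ext h i
  rw [Matrix.mul_apply]
  have hstep : ∀ t, ((z • (1 : Matrix (ZMod m) (ZMod m) ℂ) - lam • S m) h t * Nb m lam z t i)
      = (if t = h then z * Nb m lam z h i else 0)
        - (if t = h + 1 then lam * Nb m lam z (h + 1) i else 0) := by
    intro t
    have e : (z • (1 : Matrix (ZMod m) (ZMod m) ℂ) - lam • S m) h t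
        = (if t = h then z else 0) - (if t = h + 1 then lam else 0) := by
      simp only [Matrix.sub_apply, Matrix.smul_apply, Matrix.one_apply, S, Matrix.of_apply,
        smul_eq_mul, mul_ite, mul_one, mul_zero]
      congr 1
      exact if_congr eq_comm rfl rfl
    rw [e, sub_mul, ite_mul, ite_mul, zero_mul]
    by_cases h1 : t = h <;> by_cases h2 : t = h + 1
    · subst h1; rw [← h2]
    · subst h1; simp [h2]
    · subst h2; simp [h1]
    · simp [h1, h2]
  rw [Finset.sum_congr rfl (fun t _ => hstep t), Finset.sum_sub_distrib,
    Finset.sum_ite_eq' Finset.univ h, Finset.sum_ite_eq' Finset.univ (h + 1)]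
  simp only [Finset.mem_univ, if_true]
  by_cases hih : i = h
  · subst hih
    have e1 : (i - i) = (0 : ZMod m) := by ring
    have e2 : (i - (i + 1)) = (-1 : ZMod m) := by ring
    have hz : z * z ^ (m - 1) = z ^ m := by
      rw [← pow_succ']; congr 1; omega
    have hl : lam * lam ^ (m - 1) = lam ^ m := by
      rw [← pow_succ']; congr 1; omega
    simp only [Nb, Matrix.of_apply, e1, e2, ZMod.val_zero, val_neg_one',
      Matrix.smul_apply, Matrix.one_apply_eq, pow_zero, mul_one, one_mul,
      Nat.sub_self, Nat.sub_zero, smul_eq_mul]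
    rw [hz, hl]
  · have hk0 : (i - h) ≠ 0 := sub_ne_zero.mpr hih
    set k := (i - h).val with hk
    have hkpos : k ≠ 0 := fun hc => hk0 (by rwa [← ZMod.val_eq_zero])
    have hklt : k < m := ZMod.val_lt _
    have hcast : ((k : ℕ) : ZMod m) = i - h := ZMod.natCast_rightInverse _
    have e2 : (i - (h + 1)) = ((k - 1 : ℕ) : ZMod m) := by
      have h4 : (i - (h + 1)) = (i - h) - 1 := by ring
      rw [h4, ← hcast, ← Nat.cast_one, ← Nat.cast_sub (Nat.one_le_iff_ne_zero.mpr hkpos)]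
    have e2v : (i - (h + 1)).val = k - 1 := by
      rw [e2, ZMod.val_cast_of_lt]; omega
    have hne : h ≠ i := fun hc => hih hc.symm
    simp only [Nb, Matrix.of_apply, ← hk, e2v, Matrix.smul_apply,
      Matrix.one_apply_ne hne, smul_zero]
    have h1 : z * z ^ (m - 1 - k) = z ^ (m - k) := by rw [← pow_succ']; congr 1; omega
    have h2 : lam * lam ^ (k - 1) = lam ^ k := by rw [← pow_succ']; congr 1; omega
    have h3 : m - 1 - (k - 1) = m - k := by omega
    rw [h3]
    calc z * (z ^ (m - 1 - k) * lam ^ k) - lam * (z ^ (m - k) * lam ^ (k - 1))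
        = (z * z ^ (m - 1 - k)) * lam ^ k - z ^ (m - k) * (lam * lam ^ (k - 1)) := by ring
      _ = 0 := by rw [h1, h2]; ring


lemma eval_charpoly' {n : Type*} [DecidableEq n] [Fintype n] (M : Matrix n n ℂ) (z : ℂ) :
    M.charpoly.eval z = (z • (1 : Matrix n n ℂ) - M).det := by
  rw [Matrix.charpoly, ← Polynomial.coe_evalRingHom, RingHom.map_det]
  congr 1
  ext i j
  by_cases h : i = j
  · subst h
    simp [Matrix.charmatrix_apply_eq, Matrix.smul_apply, Matrix.sub_apply, Matrix.one_apply_eq]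
  · simp [Matrix.charmatrix_apply_ne _ _ _ h, Matrix.sub_apply, Matrix.smul_apply,
      Matrix.one_apply_ne h]

lemma Nb_ne_zero [NeZero m] {lam : ℂ} (hl : lam ≠ 0) (z : ℂ) : Nb m lam z ≠ 0 := by
  intro hc
  have h0 : Nb m lam z 0 (-1) = 0 := by rw [hc]; rfl
  have : Nb m lam z 0 (-1) = lam ^ (m - 1) := by
    simp [Nb, val_neg_one', Nat.sub_self]
  rw [this] at h0
  exact pow_ne_zero _ hl h0

lemma det_root [NeZero m] {lam : ℂ} (hl : lam ≠ 0) {w : ℂ} (hw : w ^ m = lam ^ m) :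
    (w • (1 : Matrix (ZMod m) (ZMod m) ℂ) - lam • S m).det = 0 := by
  by_contra hdet
  have hu : IsUnit (w • (1 : Matrix (ZMod m) (ZMod m) ℂ) - lam • S m).det :=
    isUnit_iff_ne_zero.mpr hdet
  have h0 : (w • (1 : Matrix (ZMod m) (ZMod m) ℂ) - lam • S m) * Nb m lam w = 0 := by
    rw [mul_Nb, hw, sub_self, zero_smul]
  have : Nb m lam w = 0 := by
    calc Nb m lam w = ((w • (1 : Matrix (ZMod m) (ZMod m) ℂ) - lam • S m)⁻¹ *
          (w • (1 : Matrix (ZMod m) (ZMod m) ℂ) - lam • S m)) * Nb m lam w := by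
            rw [Matrix.nonsing_inv_mul _ hu, one_mul]
      _ = 0 := by rw [Matrix.mul_assoc, h0, Matrix.mul_zero]
  exact Nb_ne_zero hl w this

lemma det_block [NeZero m] {lam : ℂ} (hl : lam ≠ 0) (z : ℂ) :
    (z • (1 : Matrix (ZMod m) (ZMod m) ℂ) - lam • S m).det = z ^ m - lam ^ m := by
  have hm : m ≠ 0 := NeZero.ne m
  set p := (lam • S m).charpoly with hp
  set q := p - (X ^ m - C (lam ^ m)) with hq
  have hmon : p.Monic := Matrix.charpoly_monic _
  have hdeg : p.natDegree = m := by
    rw [hp, Matrix.charpoly_natDegree_eq_dim, ZMod.card]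
  have hmon2 : (X ^ m - C (lam ^ m) : ℂ[X]).Monic := monic_X_pow_sub_C _ hm
  have hdeg2 : (X ^ m - C (lam ^ m) : ℂ[X]).natDegree = m := natDegree_X_pow_sub_C
  -- roots
  obtain ⟨ζ, hζ⟩ : ∃ ζ : ℂ, IsPrimitiveRoot ζ m := ⟨_, Complex.isPrimitiveRoot_exp m hm⟩
  set s : Finset ℂ := (Finset.range m).image (fun i => ζ ^ i * lam) with hs
  have hcard : s.card = m := by
    rw [hs, Finset.card_image_of_injOn, Finset.card_range]
    exact fun a ha b hb hab => hζ.injOn_pow_mul hl (by simpa using ha) (by simpa using hb) hab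
  have heval : ∀ w ∈ s, q.eval w = 0 := by
    intro w hw
    obtain ⟨i, _, rfl⟩ := Finset.mem_image.mp hw
    have hwm : (ζ ^ i * lam) ^ m = lam ^ m := by
      rw [mul_pow, ← pow_mul, mul_comm i m, pow_mul, hζ.pow_eq_one, one_pow, one_mul]
    rw [hq, eval_sub, eval_sub, eval_pow, eval_X, eval_C, hwm, sub_self,
      eval_charpoly', det_root hl hwm, zero_sub, neg_zero]
  have hq0 : q = 0 := by
    rcases eq_or_ne q 0 with h0 | h0
    · exact h0
    · refine Polynomial.eq_zero_of_natDegree_lt_card_of_eval_eq_zero' q s heval ?_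
      rw [hcard]
      have hlt : q.degree < p.degree := by
        apply Polynomial.degree_sub_lt
        · rw [Polynomial.degree_eq_natDegree hmon.ne_zero,
            Polynomial.degree_eq_natDegree hmon2.ne_zero, hdeg, hdeg2]
        · exact hmon.ne_zero
        · rw [hmon.leadingCoeff, hmon2.leadingCoeff]
      rw [Polynomial.degree_eq_natDegree hmon.ne_zero, hdeg] at hlt
      exact (Polynomial.natDegree_lt_iff_degree_lt h0).mpr hlt
  have hpeq : p = X ^ m - C (lam ^ m) := sub_eq_zero.mp hq0
  rw [← eval_charpoly', ← hp, hpeq]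
  simp

def Nmat (m n : ℕ) (lam : Fin n → ℂ) (z : ℂ) :
    Matrix (ZMod m × Fin n) (ZMod m × Fin n) ℂ :=
  Matrix.blockDiagonal fun j =>
    (∏ l ∈ Finset.univ.erase j, (z ^ m - lam l ^ m)) • Nb m (lam j) z

lemma Mblock [NeZero m] (n : ℕ) (lam : Fin n → ℂ) (z : ℂ) :
    z • (1 : Matrix (ZMod m × Fin n) (ZMod m × Fin n) ℂ) - Ltilde m n lam
      = Matrix.blockDiagonal fun j =>
          z • (1 : Matrix (ZMod m) (ZMod m) ℂ) - lam j • S m := by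
  ext ⟨h, j⟩ ⟨i, k⟩
  simp only [Matrix.sub_apply, Matrix.smul_apply, Matrix.one_apply, Ltilde, Matrix.of_apply,
    Matrix.blockDiagonal_apply, S, smul_eq_mul, mul_ite, mul_one, mul_zero, Prod.mk.injEq]
  split_ifs <;> first | rfl | tauto | simp

lemma det_M [NeZero m] {n : ℕ} {lam : Fin n → ℂ} (hlam : ∀ j, lam j ≠ 0) (z : ℂ) :
    (z • (1 : Matrix (ZMod m × Fin n) (ZMod m × Fin n) ℂ) - Ltilde m n lam).det
      = ∏ j, (z ^ m - lam j ^ m) := by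
  rw [Mblock, Matrix.det_blockDiagonal]
  exact Finset.prod_congr rfl fun j _ => det_block (hlam j) z

lemma mul_Nmat [NeZero m] {n : ℕ} (lam : Fin n → ℂ) (z : ℂ) :
    (z • (1 : Matrix (ZMod m × Fin n) (ZMod m × Fin n) ℂ) - Ltilde m n lam) * Nmat m n lam z
      = (∏ j, (z ^ m - lam j ^ m)) • 1 := by
  rw [Mblock, Nmat, ← Matrix.blockDiagonal_mul]
  have hb : ∀ j : Fin n,
      (z • (1 : Matrix (ZMod m) (ZMod m) ℂ) - lam j • S m) *
        ((∏ l ∈ Finset.univ.erase j, (z ^ m - lam l ^ m)) • Nb m (lam j) z)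
      = (∏ l, (z ^ m - lam l ^ m)) • (1 : Matrix (ZMod m) (ZMod m) ℂ) := by
    intro j
    rw [Matrix.mul_smul, mul_Nb, smul_smul, Finset.prod_erase_mul _ _ (Finset.mem_univ j)]
  calc Matrix.blockDiagonal (fun j => (z • (1 : Matrix (ZMod m) (ZMod m) ℂ) - lam j • S m) *
        ((∏ l ∈ Finset.univ.erase j, (z ^ m - lam l ^ m)) • Nb m (lam j) z))
      = Matrix.blockDiagonal (fun _ : Fin n =>
          (∏ l, (z ^ m - lam l ^ m)) • (1 : Matrix (ZMod m) (ZMod m) ℂ)) := by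
        exact congrArg _ (funext hb)
    _ = (∏ j, (z ^ m - lam j ^ m)) • 1 := by
        rw [show (fun _ : Fin n => (∏ l, (z ^ m - lam l ^ m)) • (1 : Matrix (ZMod m) (ZMod m) ℂ))
            = (∏ l, (z ^ m - lam l ^ m)) • (fun _ : Fin n => (1 : Matrix (ZMod m) (ZMod m) ℂ))
            from rfl,
          Matrix.blockDiagonal_smul]
        congr 1
        exact Matrix.blockDiagonal_one

lemma adj_eq [NeZero m] {n : ℕ} {lam : Fin n → ℂ} (z : ℂ)
    (hz : (∏ j, (z ^ m - lam j ^ m)) ≠ 0) (hlam : ∀ j, lam j ≠ 0) :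
    (z • (1 : Matrix (ZMod m × Fin n) (ZMod m × Fin n) ℂ) - Ltilde m n lam).adjugate
      = Nmat m n lam z := by
  set M := z • (1 : Matrix (ZMod m × Fin n) (ZMod m × Fin n) ℂ) - Ltilde m n lam with hM
  set c := ∏ j, (z ^ m - lam j ^ m) with hc
  have hMN : M * Nmat m n lam z = c • 1 := mul_Nmat lam z
  have hMinv : M⁻¹ = c⁻¹ • Nmat m n lam z := by
    apply Matrix.inv_eq_right_inv
    rw [Matrix.mul_smul, hMN, smul_smul, inv_mul_cancel₀ hz, one_smul]
  have hdet : M.det = c := det_M hlam z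
  have hu : IsUnit M.det := by rw [hdet]; exact isUnit_iff_ne_zero.mpr hz
  calc M.adjugate = M.adjugate * (M * M⁻¹) := by
        rw [Matrix.mul_nonsing_inv _ hu, Matrix.mul_one]
    _ = (M.adjugate * M) * M⁻¹ := by rw [Matrix.mul_assoc]
    _ = (M.det • 1) * M⁻¹ := by rw [Matrix.adjugate_mul]
    _ = M.det • M⁻¹ := by rw [Matrix.smul_mul, Matrix.one_mul]
    _ = Nmat m n lam z := by
        rw [hdet, hMinv, smul_smul, mul_inv_cancel₀ hz, one_smul]

lemma zmod_sum [NeZero m] (f : ZMod m → ℂ) :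
    ∑ h : ZMod m, f h = ∑ i ∈ Finset.range m, f (i : ZMod m) := by
  have himg : (Finset.range m).image (fun i : ℕ => (i : ZMod m)) = Finset.univ := by
    apply Finset.eq_univ_iff_forall.mpr
    intro h
    exact Finset.mem_image.mpr ⟨h.val, Finset.mem_range.mpr (ZMod.val_lt h),
      ZMod.natCast_rightInverse h⟩
  rw [← himg, Finset.sum_image]
  intro a ha b hb hab
  have h2 := congrArg ZMod.val hab
  rwa [ZMod.val_cast_of_lt (Finset.mem_range.mp ha),
    ZMod.val_cast_of_lt (Finset.mem_range.mp hb)] at h2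

lemma trace_QN [NeZero m] (hm : 2 ≤ m) {n : ℕ} (g : ZMod m → ℂ) (lam phi : Fin n → ℂ) (z : ℂ) :
    Matrix.trace (Qtilde m n g lam phi * Nmat m n lam z)
      = ∑ i ∈ Finset.range m, ∑ j : Fin n,
          (phi j + cConst m g (i : ZMod m) / lam j) * lam j * z ^ (m - 2) *
            ∏ l ∈ Finset.univ.erase j, (z ^ m - lam l ^ m) := by
  haveI : Fact (1 < m) := ⟨hm⟩
  have hone : (1 : ZMod m).val = 1 := ZMod.val_one m
  have key : ∀ (h : ZMod m) (j : Fin n),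
      (Qtilde m n g lam phi * Nmat m n lam z) (h, j) (h, j)
        = (phi j + cConst m g (h - 1) / lam j) * lam j * z ^ (m - 2) *
            ∏ l ∈ Finset.univ.erase j, (z ^ m - lam l ^ m) := by
    intro h j
    rw [Matrix.mul_apply, Fintype.sum_prod_type]
    have hinner : ∀ i : ZMod m,
        ∑ k : Fin n, Qtilde m n g lam phi (h, j) (i, k) * Nmat m n lam z (i, k) (h, j)
          = if i = h - 1 then (phi j + cConst m g i / lam j) * lam j * z ^ (m - 2) *
              ∏ l ∈ Finset.univ.erase j, (z ^ m - lam l ^ m) else 0 := by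
      intro i
      have hk : ∀ k : Fin n, Qtilde m n g lam phi (h, j) (i, k) * Nmat m n lam z (i, k) (h, j)
          = if k = j then Qtilde m n g lam phi (h, j) (i, j) *
              ((∏ l ∈ Finset.univ.erase j, (z ^ m - lam l ^ m)) *
                (z ^ (m - 1 - (h - i).val) * lam j ^ (h - i).val)) else 0 := by
        intro k
        by_cases hkj : k = j
        · subst hkj
          rw [if_pos rfl]
          congr 1
          simp [Nmat, Matrix.blockDiagonal_apply, Nb, smul_eq_mul]
        · rw [if_neg hkj]
          have h0 : Nmat m n lam z (i, k) (h, j) = 0 := by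
            simp [Nmat, Matrix.blockDiagonal_apply, hkj]
          rw [h0, mul_zero]
      rw [Finset.sum_congr rfl fun k _ => hk k, Finset.sum_ite_eq' Finset.univ j,
        if_pos (Finset.mem_univ j)]
      by_cases hi : i = h - 1
      · rw [if_pos hi]
        have hcond : h = i + 1 := by rw [hi]; ring
        have hQ : Qtilde m n g lam phi (h, j) (i, j) = phi j + cConst m g i / lam j := by
          simp [Qtilde, hcond]
        have hsub : h - i = 1 := by rw [hi]; ring
        rw [hQ, hsub, hone, show m - 1 - 1 = m - 2 from by omega, pow_one]
        ring
      · have hcond : ¬(h = i + 1) := fun hc => hi (by rw [hc]; ring)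
        rw [if_neg hi]
        have hQ : Qtilde m n g lam phi (h, j) (i, j) = 0 := by
          simp [Qtilde, hcond]
        rw [hQ, zero_mul]
    rw [Finset.sum_congr rfl fun i _ => hinner i, Finset.sum_ite_eq' Finset.univ (h - 1),
      if_pos (Finset.mem_univ _)]
  have htr : Matrix.trace (Qtilde m n g lam phi * Nmat m n lam z)
      = ∑ h : ZMod m, ∑ j : Fin n,
          (phi j + cConst m g (h - 1) / lam j) * lam j * z ^ (m - 2) *
            ∏ l ∈ Finset.univ.erase j, (z ^ m - lam l ^ m) := by
    rw [Matrix.trace, Fintype.sum_prod_type]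
    exact Finset.sum_congr rfl fun h _ => Finset.sum_congr rfl fun j _ => key h j
  rw [htr]
  rw [Fintype.sum_equiv (Equiv.subRight (1 : ZMod m))
    (fun h => ∑ j : Fin n, (phi j + cConst m g (h - 1) / lam j) * lam j * z ^ (m - 2) *
      ∏ l ∈ Finset.univ.erase j, (z ^ m - lam l ^ m))
    (fun h => ∑ j : Fin n, (phi j + cConst m g h / lam j) * lam j * z ^ (m - 2) *
      ∏ l ∈ Finset.univ.erase j, (z ^ m - lam l ^ m)) (fun x => rfl)]
  exact zmod_sum _
end DAux

/-- For `m ≥ 2`,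
`D(z) = Σ_{i=0}^{m−1} Σ_{j=1}^{n} (φⱼ + cᵢ/λⱼ) · λⱼ · z^{m−2} · ∏_{ℓ≠j} (z^m − λ_ℓ^m)`. -/
theorem Dfun_formula (m n : ℕ) [NeZero m] (hm : 2 ≤ m) (hn : 0 < n)
    (lam phi : Fin n → ℂ) (g : ZMod m → ℂ)
    (hlam : ∀ j, lam j ≠ 0)
    (hsep : ∀ j k : Fin n, j ≠ k → lam j ^ m ≠ lam k ^ m) (z : ℂ) :
    Dfun m n g lam phi z =
      ∑ i ∈ Finset.range m, ∑ j : Fin n,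
        (phi j + cConst m g (i : ZMod m) / lam j) * lam j * z ^ (m - 2) *
          ∏ l ∈ Finset.univ.erase j, (z ^ m - lam l ^ m) := by
  set F : ℂ → ℂ := fun w => ∑ i ∈ Finset.range m, ∑ j : Fin n,
      (phi j + cConst m g (i : ZMod m) / lam j) * lam j * w ^ (m - 2) *
        ∏ l ∈ Finset.univ.erase j, (w ^ m - lam l ^ m) with hF
  have hkey : ∀ w : ℂ, (∏ j, (w ^ m - lam j ^ m)) ≠ 0 → Dfun m n g lam phi w = F w := by
    intro w hw
    show Matrix.trace (Qtilde m n g lam phi *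
      (w • (1 : Matrix (ZMod m × Fin n) (ZMod m × Fin n) ℂ) - Ltilde m n lam).adjugate) = F w
    rw [DAux.adj_eq w hw hlam, DAux.trace_QN hm g lam phi w]
  have hcf : Continuous (Dfun m n g lam phi) := by
    have h1 : Continuous fun w : ℂ =>
        w • (1 : Matrix (ZMod m × Fin n) (ZMod m × Fin n) ℂ) - Ltilde m n lam :=
      (continuous_id.smul continuous_const).sub continuous_const
    exact (Continuous.matrix_mul continuous_const h1.matrix_adjugate).matrix_trace
  have hcF : Continuous F := by
    apply continuous_finset_sum; intro i _
    apply continuous_finset_sum; intro j _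
    exact ((continuous_const.mul (continuous_pow (m - 2)))).mul
      (continuous_finset_prod _ fun l _ => (continuous_pow m).sub continuous_const)
  have hdense : Dense {w : ℂ | (∏ j, (w ^ m - lam j ^ m)) ≠ 0} := by
    set P : Polynomial ℂ := ∏ j, (Polynomial.X ^ m - Polynomial.C (lam j ^ m)) with hP
    have hP0 : P ≠ 0 :=
      (Polynomial.monic_prod_of_monic _ _ fun j _ =>
        Polynomial.monic_X_pow_sub_C _ (NeZero.ne m)).ne_zero
    have hsub : {w : ℂ | P.IsRoot w}ᶜ ⊆ {w : ℂ | (∏ j, (w ^ m - lam j ^ m)) ≠ 0} := by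
      intro w hw
      simp only [Set.mem_compl_iff, Set.mem_setOf_eq, Polynomial.IsRoot, hP,
        Polynomial.eval_prod, Polynomial.eval_sub, Polynomial.eval_pow, Polynomial.eval_X,
        Polynomial.eval_C] at *
      exact hw
    exact Dense.mono hsub
      (((Polynomial.finite_setOf_isRoot hP0).countable).dense_compl ℂ)
  have heq : Dfun m n g lam phi = F :=
    Continuous.ext_on hdense hcf hcF (fun w hw => hkey w hw)
  rw [heq]
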